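/- For non-negative integers m1, n1 and M = min(m1,n1) ≥ 2, one has Σ_{i=0}^{M} min(M+1−i, ⌊(m1+n1−2i)/3⌋+1) = Σ_{i=0}^{min(m1−1,n1)} min(min(m1−1,n1)−i, ⌊(m1+n1−2i)/3⌋) + min(n1, 2m1) + 1, using the fact that m1−i < ⌊(m1+n1−2i)/3⌋+1 if and only if 2m1−n1 ≤ i ≤ m1. -/
import Mathlib

lemma aux_count (a b : ℕ) : ∀ n : ℕ,
    ∑ i ∈ Finset.range n, (if a ≤ b + i then 1 else 0) = n - (a - b) := by
  intro n
  induction n with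
  | zero => simp
  | succ k ih =>
    rw [Finset.sum_range_succ, ih]
    split <;> omega

/-- Summation identity used in the base step (m2 = 0) of the G2 bijection. -/
theorem stmt_17 (m1 n1 : ℕ) (h : 2 ≤ min m1 n1) :
    ∑ i ∈ Finset.range (min m1 n1 + 1),
        min (min m1 n1 + 1 - i) ((m1 + n1 - 2 * i) / 3 + 1) =
      (∑ i ∈ Finset.range (min (m1 - 1) n1 + 1),
          min (min (m1 - 1) n1 - i) ((m1 + n1 - 2 * i) / 3)) +
        min n1 (2 * m1) + 1 := by
  rcases le_or_gt m1 n1 with h1 | h1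
  · -- m1 ≤ n1
    have hm : 2 ≤ m1 := by omega
    rw [min_eq_left h1, min_eq_left (by omega : m1 - 1 ≤ n1)]
    have hrange : m1 - 1 + 1 = m1 := by omega
    rw [hrange]
    rw [Finset.sum_range_succ]
    have hlast : min (m1 + 1 - m1) ((m1 + n1 - 2 * m1) / 3 + 1) = 1 := by
      have : m1 + 1 - m1 = 1 := by omega
      rw [this]; omega
    rw [hlast]
    have hterm : ∀ i ∈ Finset.range m1,
        min (m1 + 1 - i) ((m1 + n1 - 2 * i) / 3 + 1) =
          min (m1 - 1 - i) ((m1 + n1 - 2 * i) / 3) + 1 +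
            (if 2 * m1 ≤ n1 + i then 1 else 0) := by
      intro i hi
      rw [Finset.mem_range] at hi
      have hq := Nat.div_add_mod (m1 + n1 - 2 * i) 3
      have hr := Nat.mod_lt (m1 + n1 - 2 * i) (by norm_num : 0 < 3)
      split <;> omega
    rw [Finset.sum_congr rfl hterm, Finset.sum_add_distrib, Finset.sum_add_distrib,
      Finset.sum_const, aux_count (2 * m1) n1 m1]
    simp only [smul_eq_mul, mul_one, Finset.card_range]
    omega
  · -- n1 < m1
    rw [min_eq_right (le_of_lt h1), min_eq_right (by omega : n1 ≤ m1 - 1)]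
    have hterm : ∀ i ∈ Finset.range (n1 + 1),
        min (n1 + 1 - i) ((m1 + n1 - 2 * i) / 3 + 1) =
          min (n1 - i) ((m1 + n1 - 2 * i) / 3) + 1 := by
      intro i hi
      rw [Finset.mem_range] at hi
      omega
    rw [Finset.sum_congr rfl hterm, Finset.sum_add_distrib, Finset.sum_const]
    simp only [smul_eq_mul, mul_one, Finset.card_range]
    omega
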